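/- arXiv:2601.21147 — 2 statements merged into one kernel-verified Lean document; each statement's English description precedes it below -/
import Mathlib

section
/- Consider the dynamic cutoff c_v as a function of the position x_t of a single neighbor t, with all other atoms fixed, where c_v = (Σ_{u∈N} ω(R_u)p(r_u/h)r_u + hε)/(Σ_{u∈N} ω(R_u)p(r_u/h) + ε), R_u = Σ_{s≠u} S(α(r_u - r_s))p(r_s/h). If r_t = h (neighbor t is exactly at the hard cutoff), then the gradient of c_v with respect to x_t vanishes: ∇_{x_t} c_v = 0. -/
open Real

/-- The logistic sigmoid `S(x) = 1/(1 + e^{-x})`. -/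
noncomputable def sigmoid : ℝ → ℝ := fun x => 1 / (1 + Real.exp (-x))

/-- The polynomial envelope `p(x) = 1 - ((n+1)(n+2)/2)xⁿ + n(n+2)xⁿ⁺¹ - (n(n+1)/2)xⁿ⁺²`. -/
noncomputable def polyEnvelope (n : ℕ) : ℝ → ℝ := fun x =>
  1 - ((n + 1) * (n + 2) / 2) * x ^ n + (n * (n + 2)) * x ^ (n + 1)
    - (n * (n + 1) / 2) * x ^ (n + 2)

/-- The Gaussian weighting function (normal PDF with mean `μ` and std `σ`). -/
noncomputable def gaussWeight (μ σ : ℝ) : ℝ → ℝ := fun x =>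
  (1 / (σ * Real.sqrt (2 * π))) * Real.exp (-(1 / 2) * ((x - μ) / σ) ^ 2)

variable {ι : Type*} [DecidableEq ι]

/-- Distance of neighbor `u` from the center atom `xv`, where the position of the
distinguished neighbor `t` is the variable `xt` and all other positions are given by `pos`. -/
noncomputable def nbrDist (d : ℕ) (t : ι) (pos : ι → EuclideanSpace ℝ (Fin d))
    (xv : EuclideanSpace ℝ (Fin d)) (xt : EuclideanSpace ℝ (Fin d)) (u : ι) : ℝ :=
  if u = t then ‖xt - xv‖ else ‖pos u - xv‖

/-- The soft rank `R_u` of neighbor `u`, as a function of the position `xt` of neighbor `t`. -/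
noncomputable def softRank (d : ℕ) (N : Finset ι) (t : ι) (pos : ι → EuclideanSpace ℝ (Fin d))
    (xv : EuclideanSpace ℝ (Fin d)) (α h : ℝ) (n : ℕ)
    (xt : EuclideanSpace ℝ (Fin d)) (u : ι) : ℝ :=
  ∑ s ∈ N.erase u, _root_.sigmoid (α * (nbrDist d t pos xv xt u - nbrDist d t pos xv xt s)) *
    polyEnvelope n (nbrDist d t pos xv xt s / h)

/-- The dynamic cutoff `c_v`, as a function of the position `xt` of neighbor `t`. -/
noncomputable def dynCutoff (d : ℕ) (N : Finset ι) (t : ι) (pos : ι → EuclideanSpace ℝ (Fin d))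
    (xv : EuclideanSpace ℝ (Fin d)) (α h ε μ σ : ℝ) (n : ℕ)
    (xt : EuclideanSpace ℝ (Fin d)) : ℝ :=
  (∑ u ∈ N, gaussWeight μ σ (softRank d N t pos xv α h n xt u) *
      polyEnvelope n (nbrDist d t pos xv xt u / h) * nbrDist d t pos xv xt u + h * ε) /
  (∑ u ∈ N, gaussWeight μ σ (softRank d N t pos xv α h n xt u) *
      polyEnvelope n (nbrDist d t pos xv xt u / h) + ε)

lemma polyEnvelope_one (n : ℕ) : polyEnvelope n 1 = 0 := by
  simp only [polyEnvelope, one_pow, mul_one]; ring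

lemma hasDerivAt_polyEnvelope (n : ℕ) (x : ℝ) :
    HasDerivAt (polyEnvelope n)
      (-(((n:ℝ)+1)*((n:ℝ)+2)/2 * ((n:ℝ) * x^(n-1)))
        + ((n:ℝ)*((n:ℝ)+2)) * (((n:ℝ)+1) * x^n)
        - ((n:ℝ)*((n:ℝ)+1)/2) * (((n:ℝ)+2) * x^(n+1))) x := by
  have h1 := (hasDerivAt_pow n x).const_mul (((n:ℝ)+1)*((n:ℝ)+2)/2)
  have h2 := (hasDerivAt_pow (n+1) x).const_mul ((n:ℝ)*((n:ℝ)+2))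
  have h3 := (hasDerivAt_pow (n+2) x).const_mul ((n:ℝ)*((n:ℝ)+1)/2)
  have h := (((hasDerivAt_const x (1:ℝ)).fun_sub h1).fun_add h2).fun_sub h3
  refine HasDerivAt.congr_deriv h ?_
  push_cast [Nat.add_sub_cancel]
  ring

lemma hasDerivAt_polyEnvelope_one (n : ℕ) : HasDerivAt (polyEnvelope n) 0 1 := by
  have h := hasDerivAt_polyEnvelope n 1
  convert h using 1
  simp; ring

lemma polyEnvelope_nonneg (n : ℕ) (hn : 1 ≤ n) {x : ℝ} (hx0 : 0 ≤ x) (hx1 : x ≤ 1) :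
    0 ≤ polyEnvelope n x := by
  obtain ⟨k, rfl⟩ : ∃ k, n = k + 1 := ⟨n - 1, by omega⟩
  have hanti : AntitoneOn (polyEnvelope (k+1)) (Set.Icc 0 1) := by
    apply antitoneOn_of_deriv_nonpos (convex_Icc 0 1)
    · apply Continuous.continuousOn
      unfold polyEnvelope; fun_prop
    · intro y _
      exact ((hasDerivAt_polyEnvelope (k+1) y).differentiableAt).differentiableWithinAt
    · intro y hy
      rw [interior_Icc] at hy
      rw [(hasDerivAt_polyEnvelope (k+1) y).deriv]
      have hkey : -((((k+1:ℕ):ℝ)+1)*(((k+1:ℕ):ℝ)+2)/2 * (((k+1:ℕ):ℝ) * y^((k+1)-1)))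
        + (((k+1:ℕ):ℝ)*(((k+1:ℕ):ℝ)+2)) * ((((k+1:ℕ):ℝ)+1) * y^(k+1))
        - (((k+1:ℕ):ℝ)*(((k+1:ℕ):ℝ)+1)/2) * ((((k+1:ℕ):ℝ)+2) * y^((k+1)+1))
        = -((((k:ℝ)+1)*((k:ℝ)+2)*((k:ℝ)+3)/2) * y^k * (1-y)^2) := by
        push_cast [Nat.add_sub_cancel]
        ring
      rw [hkey]
      have h1 : (0:ℝ) ≤ (((k:ℝ)+1)*((k:ℝ)+2)*((k:ℝ)+3)/2) * y^k * (1-y)^2 :=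
        mul_nonneg (mul_nonneg (by positivity) (pow_nonneg hy.1.le k)) (sq_nonneg _)
      linarith
  have := hanti ⟨hx0, hx1⟩ ⟨le_refl 0 |>.trans zero_le_one, le_refl 1⟩ hx1
  rwa [polyEnvelope_one] at this

lemma sigmoid_differentiable : Differentiable ℝ _root_.sigmoid := by
  unfold _root_.sigmoid
  apply Differentiable.div
  · fun_prop
  · fun_prop
  · intro x
    positivity

lemma gaussWeight_differentiable (μ σ : ℝ) : Differentiable ℝ (gaussWeight μ σ) := by
  unfold gaussWeight; fun_prop

lemma gaussWeight_nonneg (μ σ : ℝ) (hσ : 0 < σ) (x : ℝ) : 0 ≤ gaussWeight μ σ x := by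
  unfold gaussWeight; positivity

set_option maxHeartbeats 2000000 in
theorem dynCutoff_grad_vanishes_at_hard_cutoff (d : ℕ) (N : Finset ι) (t : ι) (ht : t ∈ N)
    (pos : ι → EuclideanSpace ℝ (Fin d)) (xv : EuclideanSpace ℝ (Fin d))
    (α h ε μ σ : ℝ) (n : ℕ) (hn : 3 ≤ n) (hα : 0 < α) (hh : 0 < h) (hε : 0 < ε) (hσ : 0 < σ)
    (hpos : ∀ u ∈ N, u ≠ t → ‖pos u - xv‖ ∈ Set.Icc (0 : ℝ) h)
    (xt₀ : EuclideanSpace ℝ (Fin d)) (hxt : xt₀ ≠ xv) (hrt : ‖xt₀ - xv‖ = h) :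
    fderiv ℝ (dynCutoff d N t pos xv α h ε μ σ n) xt₀ = 0 := by
  classical
  have hxv : xt₀ - xv ≠ (0 : EuclideanSpace ℝ (Fin d)) := sub_ne_zero.mpr hxt
  have hrdiff : DifferentiableAt ℝ (fun x : EuclideanSpace ℝ (Fin d) => ‖x - xv‖) xt₀ :=
    DifferentiableAt.norm ℝ (differentiableAt_id.sub (differentiableAt_const xv)) hxv
  obtain ⟨L, hL⟩ : ∃ L, HasFDerivAt (fun x : EuclideanSpace ℝ (Fin d) => ‖x - xv‖) L xt₀ :=
    ⟨_, hrdiff.hasFDerivAt⟩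
  have hrh : ‖xt₀ - xv‖ / h = 1 := by rw [hrt]; field_simp
  have hp1 := polyEnvelope_one n
  -- derivative of p(r(x)/h) vanishes at xt₀
  have hPr : HasFDerivAt (fun x : EuclideanSpace ℝ (Fin d) => polyEnvelope n (‖x - xv‖ / h))
      (0 : EuclideanSpace ℝ (Fin d) →L[ℝ] ℝ) xt₀ := by
    have hdiv : DifferentiableAt ℝ (fun x : EuclideanSpace ℝ (Fin d) => ‖x - xv‖ / h) xt₀ := by
      simpa only [div_eq_mul_inv] using hrdiff.mul_const h⁻¹
    obtain ⟨L2, hL2⟩ : ∃ L2, HasFDerivAt (fun x : EuclideanSpace ℝ (Fin d) => ‖x - xv‖ / h) L2 xt₀ :=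
      ⟨_, hdiv.hasFDerivAt⟩
    have hp' : HasDerivAt (polyEnvelope n) 0 (‖xt₀ - xv‖ / h) := by
      rw [hrh]; exact hasDerivAt_polyEnvelope_one n
    have := hp'.comp_hasFDerivAt xt₀ hL2
    simpa [Function.comp_def] using this
  have hsig := sigmoid_differentiable
  have hgw := gaussWeight_differentiable μ σ
  have hpdiff : Differentiable ℝ (polyEnvelope n) := fun y =>
    (hasDerivAt_polyEnvelope n y).differentiableAt
  have hnd : ∀ w, DifferentiableAt ℝ (fun xt => nbrDist d t pos xv xt w) xt₀ := by
    intro w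
    by_cases hw : w = t
    · simpa [nbrDist, hw] using hrdiff
    · simp only [nbrDist, if_neg hw]; exact differentiableAt_const _
  have hndF : ∀ w, w ≠ t → HasFDerivAt (fun xt => nbrDist d t pos xv xt w)
      (0 : EuclideanSpace ℝ (Fin d) →L[ℝ] ℝ) xt₀ := by
    intro w hw
    simp only [nbrDist, if_neg hw]
    exact hasFDerivAt_const _ _
  -- softRank is differentiable at xt₀
  have hsr : ∀ u, DifferentiableAt ℝ (fun xt => softRank d N t pos xv α h n xt u) xt₀ := by
    intro u
    unfold softRank
    apply DifferentiableAt.fun_sum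
    intro s _
    have hq : DifferentiableAt ℝ (fun xt => nbrDist d t pos xv xt s / h) xt₀ := by
      simpa only [div_eq_mul_inv] using (hnd s).mul_const h⁻¹
    exact ((hsig _).comp xt₀ (((hnd u).sub (hnd s)).const_mul α)).mul
      ((hpdiff _).comp xt₀ hq)
  -- softRank has zero derivative for u ≠ t
  have hsr0 : ∀ u, u ≠ t → HasFDerivAt (fun xt => softRank d N t pos xv α h n xt u)
      (0 : EuclideanSpace ℝ (Fin d) →L[ℝ] ℝ) xt₀ := by
    intro u hut
    unfold softRank
    have hterm : ∀ s ∈ N.erase u, HasFDerivAt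
        (fun xt => _root_.sigmoid (α * (nbrDist d t pos xv xt u - nbrDist d t pos xv xt s)) *
          polyEnvelope n (nbrDist d t pos xv xt s / h))
        (0 : EuclideanSpace ℝ (Fin d) →L[ℝ] ℝ) xt₀ := by
      intro s _
      by_cases hst : s = t
      · subst hst
        simp only [nbrDist, if_neg hut, if_pos rfl]
        have h1 : DifferentiableAt ℝ
            (fun xt : EuclideanSpace ℝ (Fin d) => _root_.sigmoid (α * (‖pos u - xv‖ - ‖xt - xv‖))) xt₀ :=
          (hsig _).comp xt₀ (((differentiableAt_const _).sub hrdiff).const_mul α)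
        have := h1.hasFDerivAt.fun_mul hPr
        simpa [hrh, hp1] using this
      · simp only [nbrDist, if_neg hut, if_neg hst]
        exact hasFDerivAt_const _ _
    have := HasFDerivAt.fun_sum hterm
    simpa using this
  -- gaussWeight ∘ softRank has zero derivative for u ≠ t
  have hgw0 : ∀ u, u ≠ t → HasFDerivAt
      (fun xt => gaussWeight μ σ (softRank d N t pos xv α h n xt u))
      (0 : EuclideanSpace ℝ (Fin d) →L[ℝ] ℝ) xt₀ := by
    intro u hut
    have := ((hgw (softRank d N t pos xv α h n xt₀ u)).hasDerivAt).comp_hasFDerivAt xt₀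
      (hsr0 u hut)
    simpa [Function.comp_def] using this
  -- each denominator summand has zero derivative
  have hB : ∀ u ∈ N, HasFDerivAt
      (fun xt => gaussWeight μ σ (softRank d N t pos xv α h n xt u) *
        polyEnvelope n (nbrDist d t pos xv xt u / h))
      (0 : EuclideanSpace ℝ (Fin d) →L[ℝ] ℝ) xt₀ := by
    intro u _
    by_cases hut : u = t
    · have h1 : DifferentiableAt ℝ
          (fun xt => gaussWeight μ σ (softRank d N t pos xv α h n xt u)) xt₀ :=
        (hgw _).comp xt₀ (hsr u)
      have h2 : HasFDerivAt
          (fun xt : EuclideanSpace ℝ (Fin d) => polyEnvelope n (nbrDist d t pos xv xt u / h))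
          (0 : EuclideanSpace ℝ (Fin d) →L[ℝ] ℝ) xt₀ := by
        simpa [nbrDist, if_pos hut] using hPr
      have := h1.hasFDerivAt.fun_mul h2
      simpa [nbrDist, if_pos hut, hrh, hp1] using this
    · have h2 : HasFDerivAt
          (fun xt : EuclideanSpace ℝ (Fin d) => polyEnvelope n (nbrDist d t pos xv xt u / h))
          (0 : EuclideanSpace ℝ (Fin d) →L[ℝ] ℝ) xt₀ := by
        simp only [nbrDist, if_neg hut]
        exact hasFDerivAt_const _ _
      have := (hgw0 u hut).fun_mul h2
      simpa using this
  -- each numerator summand has zero derivative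
  have hA : ∀ u ∈ N, HasFDerivAt
      (fun xt => gaussWeight μ σ (softRank d N t pos xv α h n xt u) *
        polyEnvelope n (nbrDist d t pos xv xt u / h) * nbrDist d t pos xv xt u)
      (0 : EuclideanSpace ℝ (Fin d) →L[ℝ] ℝ) xt₀ := by
    intro u hu
    by_cases hut : u = t
    · have h3 : HasFDerivAt (fun xt => nbrDist d t pos xv xt u) L xt₀ := by
        simpa [nbrDist, if_pos hut] using hL
      have := (hB u hu).fun_mul h3
      simpa [nbrDist, if_pos hut, hrh, hp1] using this
    · have := (hB u hu).fun_mul (hndF u hut)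
      simpa using this
  -- numerator and denominator as functions
  have hnum : HasFDerivAt
      (fun xt => ∑ u ∈ N, gaussWeight μ σ (softRank d N t pos xv α h n xt u) *
        polyEnvelope n (nbrDist d t pos xv xt u / h) * nbrDist d t pos xv xt u + h * ε)
      (0 : EuclideanSpace ℝ (Fin d) →L[ℝ] ℝ) xt₀ := by
    have := (HasFDerivAt.fun_sum hA).add_const (h * ε)
    simpa using this
  have hden : HasFDerivAt
      (fun xt => ∑ u ∈ N, gaussWeight μ σ (softRank d N t pos xv α h n xt u) *
        polyEnvelope n (nbrDist d t pos xv xt u / h) + ε)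
      (0 : EuclideanSpace ℝ (Fin d) →L[ℝ] ℝ) xt₀ := by
    have := (HasFDerivAt.fun_sum hB).add_const ε
    simpa using this
  -- denominator is nonzero at xt₀
  have hbnd : ∀ u ∈ N, 0 ≤ nbrDist d t pos xv xt₀ u / h ∧ nbrDist d t pos xv xt₀ u / h ≤ 1 := by
    intro u hu
    by_cases hut : u = t
    · simp only [nbrDist, if_pos hut]
      rw [hrh]
      exact ⟨zero_le_one, le_refl 1⟩
    · simp only [nbrDist, if_neg hut]
      obtain ⟨h0, h1⟩ := hpos u hu hut
      exact ⟨div_nonneg h0 hh.le, (div_le_one hh).mpr h1⟩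
  have hBne : (∑ u ∈ N, gaussWeight μ σ (softRank d N t pos xv α h n xt₀ u) *
      polyEnvelope n (nbrDist d t pos xv xt₀ u / h) + ε) ≠ 0 := by
    have hsum : (0:ℝ) ≤ ∑ u ∈ N, gaussWeight μ σ (softRank d N t pos xv α h n xt₀ u) *
        polyEnvelope n (nbrDist d t pos xv xt₀ u / h) :=
      Finset.sum_nonneg fun u hu => mul_nonneg (gaussWeight_nonneg μ σ hσ _)
        (polyEnvelope_nonneg n (by omega) (hbnd u hu).1 (hbnd u hu).2)
    have : (0:ℝ) < ∑ u ∈ N, gaussWeight μ σ (softRank d N t pos xv α h n xt₀ u) *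
        polyEnvelope n (nbrDist d t pos xv xt₀ u / h) + ε := by linarith
    exact this.ne'
  -- inverse of denominator has zero derivative
  have hinv : HasFDerivAt
      (fun xt => (∑ u ∈ N, gaussWeight μ σ (softRank d N t pos xv α h n xt u) *
        polyEnvelope n (nbrDist d t pos xv xt u / h) + ε)⁻¹)
      (0 : EuclideanSpace ℝ (Fin d) →L[ℝ] ℝ) xt₀ := by
    have := (hasDerivAt_inv hBne).comp_hasFDerivAt xt₀ hden
    simpa [Function.comp_def] using this
  have hfinal := hnum.fun_mul hinv
  have hmain : HasFDerivAt (dynCutoff d N t pos xv α h ε μ σ n)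
      (0 : EuclideanSpace ℝ (Fin d) →L[ℝ] ℝ) xt₀ := by
    unfold dynCutoff
    simp only [div_eq_mul_inv]
    simpa [div_eq_mul_inv] using hfinal
  exact hmain.fderiv
end

section
/- Let g : ℝ^d → ℝ be defined piecewise as g(x) = F(x) if φ(x) ≤ 0 and g(x) = G(x) if φ(x) > 0, where F, G, φ are C² and on the boundary set {φ = 0} one has F = G, ∇F = ∇G, and Hess F = Hess G. Assume additionally 0 is a regular value of φ. Then g is C² on ℝ^d. -/
open Asymptotics Filter

section Aux

variable {E N : Type*} [NormedAddCommGroup E] [NormedSpace ℝ E]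
  [NormedAddCommGroup N] [NormedSpace ℝ N]

/-- Gluing a flat function with zero: differentiability and derivative formula. -/
lemma flat_glue_hasFDerivAt (φ : E → ℝ) (hφ : Continuous φ) (H : E → N)
    (hH : Differentiable ℝ H) (h0 : ∀ x, φ x = 0 → H x = 0)
    (h1 : ∀ x, φ x = 0 → fderiv ℝ H x = 0) (x : E) :
    HasFDerivAt (fun y => if φ y ≤ 0 then (0 : N) else H y)
      (if φ x ≤ 0 then (0 : E →L[ℝ] N) else fderiv ℝ H x) x := by
  rcases lt_trichotomy (φ x) 0 with hx | hx | hx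
  · have hev : ∀ᶠ y in nhds x, φ y < 0 :=
      hφ.continuousAt.eventually_lt continuousAt_const hx
    rw [if_pos hx.le]
    refine (hasFDerivAt_const (0 : N) x).congr_of_eventuallyEq ?_
    filter_upwards [hev] with y hy
    simp [hy.le]
  · -- boundary point
    have hH0 : HasFDerivAt H (0 : E →L[ℝ] N) x := by
      have := (hH x).hasFDerivAt
      rwa [h1 x hx] at this
    rw [if_pos hx.le]
    rw [hasFDerivAt_iff_isLittleO]
    have hlittle : (fun y => H y) =o[nhds x] fun y => y - x := by
      have := hasFDerivAt_iff_isLittleO.1 hH0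
      simpa [h0 x hx] using this
    have hbig : (fun y => if φ y ≤ 0 then (0 : N) else H y) =O[nhds x]
        (fun y => H y) := by
      refine isBigO_of_le _ fun y => ?_
      by_cases hy : φ y ≤ 0 <;> simp [hy]
    have : (fun y => if φ y ≤ 0 then (0 : N) else H y) =o[nhds x]
        fun y => y - x := hbig.trans_isLittleO hlittle
    simpa [hx.le] using this
  · have hev : ∀ᶠ y in nhds x, 0 < φ y :=
      continuousAt_const.eventually_lt hφ.continuousAt hx
    rw [if_neg (not_le.2 hx)]
    refine (hH x).hasFDerivAt.congr_of_eventuallyEq ?_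
    filter_upwards [hev] with y hy
    simp [not_le.2 hy]

/-- Gluing a flat function with zero: continuity. -/
lemma flat_glue_continuous (φ : E → ℝ) (hφ : Continuous φ) (H : E → N)
    (hH : Continuous H) (h0 : ∀ x, φ x = 0 → H x = 0) :
    Continuous (fun y => if φ y ≤ 0 then (0 : N) else H y) := by
  rw [continuous_iff_continuousAt]
  intro x
  rcases lt_trichotomy (φ x) 0 with hx | hx | hx
  · have hev : ∀ᶠ y in nhds x, φ y < 0 :=
      hφ.continuousAt.eventually_lt continuousAt_const hx
    refine ContinuousAt.congr (continuousAt_const (y := (0:N))) ?_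
    filter_upwards [hev] with y hy
    simp [hy.le]
  · have hx0 : (fun y => if φ y ≤ 0 then (0 : N) else H y) x = 0 := by simp [hx.le]
    unfold ContinuousAt
    rw [hx0]
    have : Tendsto (fun y => ‖H y‖) (nhds x) (nhds 0) := by
      have := (hH.norm.tendsto x)
      rwa [h0 x hx, norm_zero] at this
    refine squeeze_zero_norm (fun y => ?_) this
    by_cases hy : φ y ≤ 0 <;> simp [hy]
  · have hev : ∀ᶠ y in nhds x, 0 < φ y :=
      continuousAt_const.eventually_lt hφ.continuousAt hx
    refine ContinuousAt.congr (hH.continuousAt) ?_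
    filter_upwards [hev] with y hy
    simp [not_le.2 hy]

/-- The main abstract lemma: gluing a "second-order flat" C² function with 0 is C². -/
lemma flat_glue_contDiff_two (φ : E → ℝ) (hφ : Continuous φ) (H : E → N)
    (hH : ContDiff ℝ 2 H) (h0 : ∀ x, φ x = 0 → H x = 0)
    (h1 : ∀ x, φ x = 0 → fderiv ℝ H x = 0)
    (h2 : ∀ x, φ x = 0 → fderiv ℝ (fderiv ℝ H) x = 0) :
    ContDiff ℝ 2 (fun y => if φ y ≤ 0 then (0 : N) else H y) := by
  have hHd : Differentiable ℝ H := hH.differentiable two_ne_zero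
  have hH' : ContDiff ℝ 1 (fderiv ℝ H) := hH.fderiv_right (le_refl _)
  have hH'd : Differentiable ℝ (fderiv ℝ H) := hH'.differentiable one_ne_zero
  have key1 := flat_glue_hasFDerivAt φ hφ H hHd h0 h1
  have key2 := flat_glue_hasFDerivAt φ hφ (fderiv ℝ H) hH'd h1 h2
  have hdiff1 : Differentiable ℝ (fun y => if φ y ≤ 0 then (0 : N) else H y) :=
    fun x => (key1 x).differentiableAt
  have hfd1 : (fderiv ℝ (fun y => if φ y ≤ 0 then (0 : N) else H y)) =
      fun y => if φ y ≤ 0 then (0 : E →L[ℝ] N) else fderiv ℝ H y := by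
    funext x; exact (key1 x).fderiv
  rw [show (2 : WithTop ℕ∞) = 1 + 1 from rfl, contDiff_succ_iff_fderiv]
  refine ⟨hdiff1, by simp, ?_⟩
  rw [hfd1]
  rw [contDiff_one_iff_fderiv]
  have hdiff2 : Differentiable ℝ
      (fun y => if φ y ≤ 0 then (0 : E →L[ℝ] N) else fderiv ℝ H y) :=
    fun x => (key2 x).differentiableAt
  refine ⟨hdiff2, ?_⟩
  have hfd2 : (fderiv ℝ (fun y => if φ y ≤ 0 then (0 : E →L[ℝ] N) else fderiv ℝ H y)) =
      fun y => if φ y ≤ 0 then (0 : E →L[ℝ] (E →L[ℝ] N)) else fderiv ℝ (fderiv ℝ H) y := by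
    funext x; exact (key2 x).fderiv
  rw [hfd2]
  exact flat_glue_continuous φ hφ _ ((hH'.fderiv_right (m := 0) le_rfl).continuous) h2

end Aux

theorem piecewise_gluing_C2 (d : ℕ) (F G φ : (Fin d → ℝ) → ℝ)
    (hF : ContDiff ℝ 2 F) (hG : ContDiff ℝ 2 G) (hφ : ContDiff ℝ 2 φ)
    (hval : ∀ x, φ x = 0 → F x = G x)
    (hgrad : ∀ x, φ x = 0 → fderiv ℝ F x = fderiv ℝ G x)
    (hhess : ∀ x, φ x = 0 → fderiv ℝ (fderiv ℝ F) x = fderiv ℝ (fderiv ℝ G) x)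
    (hreg : ∀ x, φ x = 0 → fderiv ℝ φ x ≠ 0) :
    ContDiff ℝ 2 (fun x => if φ x ≤ 0 then F x else G x) := by
  set H : (Fin d → ℝ) → ℝ := fun x => G x - F x with hHdef
  have hFd : Differentiable ℝ F := hF.differentiable two_ne_zero
  have hGd : Differentiable ℝ G := hG.differentiable two_ne_zero
  have hF' : ContDiff ℝ 1 (fderiv ℝ F) := hF.fderiv_right (le_refl _)
  have hG' : ContDiff ℝ 1 (fderiv ℝ G) := hG.fderiv_right (le_refl _)
  have hH : ContDiff ℝ 2 H := hG.sub hF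
  have hfdH : fderiv ℝ H = fun x => fderiv ℝ G x - fderiv ℝ F x := by
    funext x
    exact fderiv_sub (hGd x) (hFd x)
  have h0 : ∀ x, φ x = 0 → H x = 0 := fun x hx => by
    simp [hHdef, (hval x hx).symm]
  have h1 : ∀ x, φ x = 0 → fderiv ℝ H x = 0 := fun x hx => by
    simp [hfdH, hgrad x hx]
  have h2 : ∀ x, φ x = 0 → fderiv ℝ (fderiv ℝ H) x = 0 := fun x hx => by
    rw [hfdH]
    rw [show (fun x => fderiv ℝ G x - fderiv ℝ F x) = fun x => fderiv ℝ G x - fderiv ℝ F x from rfl,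
      fderiv_fun_sub (hG'.differentiable one_ne_zero x) (hF'.differentiable one_ne_zero x),
      hhess x hx]
    simp
  have hk := flat_glue_contDiff_two φ hφ.continuous H hH h0 h1 h2
  have : (fun x => if φ x ≤ 0 then F x else G x) =
      fun x => F x + (if φ x ≤ 0 then (0:ℝ) else H x) := by
    funext x
    by_cases hx : φ x ≤ 0 <;> simp [hx, hHdef]
  rw [this]
  exact hF.add hk
end
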